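/- Let n ≥ 2, let P ⊆ Fin n be a finite subset with |P| = p, and fix a position k : Fin n. Then (1/n!) · ∑_{σ ∈ Equiv.Perm (Fin n)} [σ k ∈ P] · |{ j : Fin n | j < k ∧ σ j ∈ P }| = (p · (p − 1) / (n · (n − 1))) · k.val, as an identity of real numbers, where [·] denotes the 0/1 indicator. -/

import Mathlib

section aux

lemma exists_perm_pair {α : Type*} [DecidableEq α] {a b c d : α} (hab : a ≠ b) (hcd : c ≠ d) :
    ∃ τ : Equiv.Perm α, τ a = c ∧ τ b = d := by
  refine ⟨Equiv.swap (Equiv.swap a c b) d * Equiv.swap a c, ?_, ?_⟩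
  · simp only [Equiv.Perm.mul_apply, Equiv.swap_apply_left]
    rw [Equiv.swap_apply_of_ne_of_ne]
    · intro h
      by_cases hbc : b = c
      · subst hbc
        simp at h
        exact hab h.symm
      · rw [Equiv.swap_apply_of_ne_of_ne (Ne.symm hab) hbc] at h
        exact hbc h.symm
    · exact hcd
  · simp [Equiv.Perm.mul_apply]

lemma fiber_card_eq {n : ℕ} {k j : Fin n} {a b c d : Fin n} (hab : a ≠ b) (hcd : c ≠ d) :
    (Finset.univ.filter fun σ : Equiv.Perm (Fin n) => σ k = a ∧ σ j = b).card =
      (Finset.univ.filter fun σ : Equiv.Perm (Fin n) => σ k = c ∧ σ j = d).card := by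
  obtain ⟨τ, hτa, hτb⟩ := exists_perm_pair hab hcd
  apply Finset.card_bij' (fun σ _ => τ * σ) (fun σ _ => τ⁻¹ * σ)
  · intro σ hσ
    simp only [Finset.mem_filter, Finset.mem_univ, true_and] at hσ ⊢
    simp [hσ.1, hσ.2, hτa, hτb]
  · intro σ hσ
    simp only [Finset.mem_filter, Finset.mem_univ, true_and] at hσ ⊢
    constructor
    · rw [Equiv.Perm.mul_apply, hσ.1, ← hτa]; simp
    · rw [Equiv.Perm.mul_apply, hσ.2, ← hτb]; simp
  · intro σ _; simp [mul_assoc]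
  · intro σ _; simp [mul_assoc]

lemma sum_fibers {n : ℕ} {k j : Fin n} (hkj : k ≠ j) (Q : Finset (Fin n)) :
    (Finset.univ.filter fun σ : Equiv.Perm (Fin n) => σ k ∈ Q ∧ σ j ∈ Q).card =
      ∑ x ∈ Q.offDiag,
        (Finset.univ.filter fun σ : Equiv.Perm (Fin n) => σ k = x.1 ∧ σ j = x.2).card := by
  rw [Finset.card_eq_sum_card_fiberwise
    (f := fun σ : Equiv.Perm (Fin n) => (σ k, σ j)) (t := Q.offDiag)]
  · apply Finset.sum_congr rfl
    intro x hx
    congr 1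
    ext σ
    rw [Finset.mem_offDiag] at hx
    simp only [Finset.mem_filter, Finset.mem_univ, true_and, Prod.ext_iff]
    constructor
    · rintro ⟨_, h1, h2⟩; exact ⟨h1, h2⟩
    · rintro ⟨h1, h2⟩; exact ⟨⟨h1 ▸ hx.1, h2 ▸ hx.2.1⟩, h1, h2⟩
  · intro σ hσ
    rw [Finset.mem_coe, Finset.mem_filter] at hσ
    rw [Finset.mem_coe, Finset.mem_offDiag]
    exact ⟨hσ.2.1, hσ.2.2, fun h => hkj (σ.injective h)⟩

end aux

/-- Hypergeometric-type identity: expected product of the indicator that position `k`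
holds a positive item and the number of positive items in earlier positions, under a
uniformly random permutation of `n` items of which `p` are positive. -/
theorem perm_average_indicator_count (n : ℕ) (hn : 2 ≤ n) (P : Finset (Fin n)) (p : ℕ)
    (hp : P.card = p) (k : Fin n) :
    (1 / ((Fintype.card (Fin n)).factorial : ℝ)) *
        ∑ σ : Equiv.Perm (Fin n),
          (if σ k ∈ P then (1 : ℝ) else 0) *
            ((Finset.univ.filter (fun j : Fin n => j < k ∧ σ j ∈ P)).card : ℝ) =
      ((p : ℝ) * ((p : ℝ) - 1) / ((n : ℝ) * ((n : ℝ) - 1))) * ((k : ℕ) : ℝ) := by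
  -- two distinct reference points
  set a0 : Fin n := ⟨0, by omega⟩ with ha0
  set a1 : Fin n := ⟨1, by omega⟩ with ha1
  have h01 : a0 ≠ a1 := by simp [ha0, ha1, Fin.ext_iff]
  -- the key counting identity for each j ≠ k
  have key : ∀ j : Fin n, j ≠ k →
      (Finset.univ.filter fun σ : Equiv.Perm (Fin n) => σ k ∈ P ∧ σ j ∈ P).card * (n * n - n) =
        (p * p - p) * n.factorial := by
    intro j hjk
    have hkj : k ≠ j := hjk.symm
    set c0 := (Finset.univ.filter fun σ : Equiv.Perm (Fin n) => σ k = a0 ∧ σ j = a1).card with hc0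
    have hS : (Finset.univ.filter fun σ : Equiv.Perm (Fin n) => σ k ∈ P ∧ σ j ∈ P).card =
        (p * p - p) * c0 := by
      rw [sum_fibers hkj P]
      rw [Finset.sum_congr rfl (fun x hx => fiber_card_eq (Finset.mem_offDiag.mp hx).2.2 h01)]
      rw [Finset.sum_const, Finset.offDiag_card, hp, smul_eq_mul]
    have hT : n.factorial = (n * n - n) * c0 := by
      have : (Finset.univ.filter fun σ : Equiv.Perm (Fin n) =>
          σ k ∈ (Finset.univ : Finset (Fin n)) ∧ σ j ∈ (Finset.univ : Finset (Fin n))).card =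
          (n * n - n) * c0 := by
        rw [sum_fibers hkj Finset.univ]
        rw [Finset.sum_congr rfl (fun x hx => fiber_card_eq (Finset.mem_offDiag.mp hx).2.2 h01)]
        rw [Finset.sum_const, Finset.offDiag_card, smul_eq_mul]
        simp
        exact Or.inl hc0.symm
      simpa [Fintype.card_perm] using this
    rw [hS, hT]; ring
  -- rewrite each summand as a sum over j < k
  have step1 : ∀ σ : Equiv.Perm (Fin n),
      (if σ k ∈ P then (1 : ℝ) else 0) *
          ((Finset.univ.filter (fun j : Fin n => j < k ∧ σ j ∈ P)).card : ℝ) =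
        ∑ j ∈ Finset.univ.filter (fun j : Fin n => j < k),
          (if σ k ∈ P ∧ σ j ∈ P then (1 : ℝ) else 0) := by
    intro σ
    by_cases h : σ k ∈ P
    · simp only [h, if_true, true_and, one_mul]
      rw [Finset.sum_boole, Finset.filter_filter]
    · simp [h]
  have hTcard : (Finset.univ.filter (fun j : Fin n => j < k)).card = (k : ℕ) := by
    have : (Finset.univ.filter (fun j : Fin n => j < k)) = Finset.Iio k := by
      ext j; simp
    rw [this, Fin.card_Iio]
  -- facts for the final arithmetic
  have hn0 : (0 : ℝ) < (n.factorial : ℝ) := by exact_mod_cast n.factorial_pos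
  have hnn : ((n : ℝ) * ((n : ℝ) - 1)) ≠ 0 := by
    have h2 : (2 : ℝ) ≤ (n : ℝ) := by exact_mod_cast hn
    have : (0:ℝ) < (n:ℝ) * ((n:ℝ) - 1) := by nlinarith
    linarith [this]
  have hcastn : ((n * n - n : ℕ) : ℝ) = (n : ℝ) * ((n : ℝ) - 1) := by
    have : n ≤ n * n := by nlinarith
    push_cast [this]; ring
  have hcastp : ((p * p - p : ℕ) : ℝ) = (p : ℝ) * ((p : ℝ) - 1) := by
    have : p ≤ p * p := by nlinarith
    push_cast [this]; ring
  have hS : ∀ j ∈ Finset.univ.filter (fun j : Fin n => j < k),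
      ((Finset.univ.filter fun σ : Equiv.Perm (Fin n) => σ k ∈ P ∧ σ j ∈ P).card : ℝ) =
        (p : ℝ) * ((p : ℝ) - 1) * (n.factorial : ℝ) / ((n : ℝ) * ((n : ℝ) - 1)) := by
    intro j hj
    rw [Finset.mem_filter] at hj
    have hjk : j ≠ k := ne_of_lt hj.2
    have := key j hjk
    have hre : ((Finset.univ.filter fun σ : Equiv.Perm (Fin n) =>
        σ k ∈ P ∧ σ j ∈ P).card : ℝ) * ((n * n - n : ℕ) : ℝ) =
        ((p * p - p : ℕ) : ℝ) * (n.factorial : ℝ) := by exact_mod_cast congrArg Nat.cast this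
    rw [hcastn, hcastp] at hre
    rw [eq_div_iff hnn]
    linarith [hre]
  calc (1 / ((Fintype.card (Fin n)).factorial : ℝ)) *
        ∑ σ : Equiv.Perm (Fin n),
          (if σ k ∈ P then (1 : ℝ) else 0) *
            ((Finset.univ.filter (fun j : Fin n => j < k ∧ σ j ∈ P)).card : ℝ)
      = (1 / (n.factorial : ℝ)) *
        ∑ σ : Equiv.Perm (Fin n), ∑ j ∈ Finset.univ.filter (fun j : Fin n => j < k),
          (if σ k ∈ P ∧ σ j ∈ P then (1 : ℝ) else 0) := by
        rw [Finset.sum_congr rfl (fun σ _ => step1 σ)]; simp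
    _ = (1 / (n.factorial : ℝ)) *
        ∑ j ∈ Finset.univ.filter (fun j : Fin n => j < k),
          ((Finset.univ.filter fun σ : Equiv.Perm (Fin n) => σ k ∈ P ∧ σ j ∈ P).card : ℝ) := by
        rw [Finset.sum_comm]
        congr 1
        exact Finset.sum_congr rfl (fun j _ => by rw [Finset.sum_boole])
    _ = (1 / (n.factorial : ℝ)) * ((k : ℕ) *
          ((p : ℝ) * ((p : ℝ) - 1) * (n.factorial : ℝ) / ((n : ℝ) * ((n : ℝ) - 1)))) := by
        rw [Finset.sum_congr rfl hS, Finset.sum_const, hTcard, nsmul_eq_mul]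
    _ = ((p : ℝ) * ((p : ℝ) - 1) / ((n : ℝ) * ((n : ℝ) - 1))) * ((k : ℕ) : ℝ) := by
        field_simp
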